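/- Let r = (2l+1)/2 with l ≥ 1 an integer and v = ν₂(l). Then for all 0 ≤ m ≤ v, the iterate f^(m)(r) is not an integer, where f(x) = x·⌈x⌉. In other words, f^(m)(r) first becomes an integer exactly at m = v+1. -/

import Mathlib

lemma ceil_half_aux (k : ℕ) : ⌈((2*(k:ℚ)+1))/2⌉ = (k : ℤ) + 1 := by
  have h : ((2*(k:ℚ)+1))/2 = (1/2 : ℚ) + (k : ℚ) := by ring
  have h2 : ⌈(1/2 : ℚ)⌉ = 1 := by
    rw [Int.ceil_eq_iff] ; norm_num
  rw [h, Int.ceil_add_natCast, h2]; ring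

/-- Theorem 1 (minimality part): for `r = (2l+1)/2` with `l ≥ 1` and `v = ν₂(l)`,
the iterates `f^(m)(r)` for `0 ≤ m ≤ v` are not integers, where `f x = x * ⌈x⌉`. -/
theorem approx_squaring_den_two_not_int_before (l : ℕ) (hl : 1 ≤ l) :
    ∀ m : ℕ, m ≤ padicValNat 2 l →
      ¬ ∃ n : ℤ,
        (fun x : ℚ => x * (⌈x⌉ : ℚ))^[m] ((2 * l + 1) / 2) = n := by
  have key : ∀ m : ℕ, m ≤ padicValNat 2 l →
      ∃ k : ℕ, 1 ≤ k ∧ padicValNat 2 k + m = padicValNat 2 l ∧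
        (fun x : ℚ => x * (⌈x⌉ : ℚ))^[m] ((2 * l + 1) / 2) = (2 * k + 1) / 2 := by
    intro m hm
    induction m with
    | zero => exact ⟨l, hl, by simp, by simp⟩
    | succ m ih =>
      obtain ⟨k, hk1, hkv, hke⟩ := ih (le_of_lt (Nat.lt_of_succ_le hm))
      have hkpos : 1 ≤ padicValNat 2 k := by omega
      have h2k : 2 ∣ k := by
        by_contra h
        have := padicValNat.eq_zero_of_not_dvd h
        omega
      obtain ⟨t, rfl⟩ := h2k
      have ht1 : 1 ≤ t := by omega
      refine ⟨t * (4*t+3), Nat.one_le_iff_ne_zero.mpr (by positivity), ?_, ?_⟩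
      · have h1 : padicValNat 2 (2*t) = 1 + padicValNat 2 t := by
          rw [padicValNat.mul (by norm_num) (by omega)]
          simp [padicValNat.self]
        have h2 : padicValNat 2 (t*(4*t+3)) = padicValNat 2 t := by
          rw [padicValNat.mul (by omega) (by omega)]
          have : padicValNat 2 (4*t+3) = 0 :=
            padicValNat.eq_zero_of_not_dvd (by omega)
          omega
        omega
      · rw [Function.iterate_succ_apply', hke]
        have hc : ((2 * ((2*t : ℕ)) + 1 : ℚ)) / 2 = (2*(((2*t : ℕ)):ℚ)+1)/2 := by ring
        rw [hc, ceil_half_aux (2*t)]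
        push_cast
        ring
  intro m hm ⟨n, hn⟩
  obtain ⟨k, hk1, -, hke⟩ := key m hm
  rw [hke] at hn
  rw [div_eq_iff (by norm_num : (2:ℚ) ≠ 0)] at hn
  have h2 : (2*(k:ℤ)+1 : ℤ) = n*2 := by exact_mod_cast hn
  omega
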